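/- Every module over a ring R is a filtered colimit of finitely presented R-modules. In particular, every flat R-module is a filtered colimit of finitely generated free R-modules (Lazard's theorem). -/

import Mathlib

open CategoryTheory CategoryTheory.Limits

universe u

/-- A presentation of a module `M` as a filtered colimit of a diagram of modules. -/
structure FilteredColimitPresentation (R : Type u) [Ring R] (M : ModuleCat.{u} R) where
  /-- the filtered index category -/
  J : Type u
  [cat : SmallCategory J]
  filtered : IsFiltered J
  /-- the diagram -/
  F : J ⥤ ModuleCat.{u} R
  /-- `M` is the colimit of the diagram -/
  iso : colimit F ≅ M

attribute [instance] FilteredColimitPresentation.cat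

section Helpers

/-- The canonical equivalence `(Fin (n+m) → R) ≃ (Fin n → R) × (Fin m → R)`. -/
noncomputable def finAddLEquiv (R : Type u) [CommRing R] (n m : ℕ) :
    (Fin (n + m) → R) ≃ₗ[R] (Fin n → R) × (Fin m → R) :=
  (LinearEquiv.funCongrLeft R R finSumFinEquiv).trans
    (LinearEquiv.sumArrowLequivProdArrow _ _ R R)

/-- Convert a finsupp free module into a `Fin`-indexed one. -/
noncomputable def finsuppLEquiv (R : Type u) [CommRing R] (κ : Type*) [Fintype κ] :
    (κ →₀ R) ≃ₗ[R] (Fin (Fintype.card κ) → R) :=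
  (Finsupp.linearEquivFunOnFinite R R κ).trans
    (LinearEquiv.funCongrLeft R R (Fintype.equivFin κ).symm)

end Helpers

section Laz

variable {R : Type u} [CommRing R] (M : ModuleCat.{u} R)

/-- An index object: a finite free module with a map to `M`. -/
structure LazObj : Type u where
  n : ℕ
  f : (Fin n → R) →ₗ[R] M

instance : SmallCategory (LazObj M) where
  Hom A B := {g : (Fin A.n → R) →ₗ[R] (Fin B.n → R) // B.f ∘ₗ g = A.f}
  id A := ⟨LinearMap.id, LinearMap.comp_id _⟩
  comp g h := ⟨h.1 ∘ₗ g.1, by rw [← LinearMap.comp_assoc, h.2, g.2]⟩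
  id_comp g := Subtype.ext (LinearMap.comp_id _)
  comp_id g := Subtype.ext (LinearMap.id_comp _)
  assoc f g h := Subtype.ext (LinearMap.comp_assoc _ _ _).symm

/-- The diagram of finite free modules over `M`. -/
noncomputable def lazF : LazObj M ⥤ ModuleCat.{u} R where
  obj A := ModuleCat.of R (Fin A.n → R)
  map g := ModuleCat.ofHom g.1
  map_id _ := rfl
  map_comp _ _ := rfl

/-- The cocone over `lazF` with point `M`. -/
noncomputable def lazCocone : Cocone (lazF M) where
  pt := M
  ι :=
    { app := fun A => ModuleCat.ofHom A.f
      naturality := fun A B g => by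
        simp only [Functor.const_obj_map, Category.comp_id]
        exact ModuleCat.hom_ext g.2 }

end Laz

section LazFiltered

variable {R : Type u} [CommRing R] (M : ModuleCat.{u} R)

/-- Given factorization data from the equational criterion, build a new object. -/
noncomputable def lazOfFactor {κ : Type*} [Fintype κ] (y : (κ →₀ R) →ₗ[R] M) : LazObj M :=
  ⟨Fintype.card κ, y ∘ₗ (finsuppLEquiv R κ).symm⟩

/-- The morphism into `lazOfFactor` coming from factorization data. -/
noncomputable def lazHomOfFactor {κ : Type*} [Fintype κ] {A : LazObj M}
    {a : (Fin A.n → R) →ₗ[R] (κ →₀ R)} {y : (κ →₀ R) →ₗ[R] M}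
    (hya : A.f = y ∘ₗ a) : A ⟶ lazOfFactor M y :=
  ⟨(finsuppLEquiv R κ).toLinearMap ∘ₗ a, by
    refine LinearMap.ext fun v => ?_
    simp [lazOfFactor, hya]⟩

theorem lazFiltered [Module.Flat R M] : IsFiltered (LazObj M) where
  nonempty := ⟨⟨0, 0⟩⟩
  cocone_objs A B := by
    refine ⟨⟨A.n + B.n, (A.f.coprod B.f) ∘ₗ (finAddLEquiv R A.n B.n : _ →ₗ[R] _)⟩,
      ⟨(finAddLEquiv R A.n B.n).symm.toLinearMap ∘ₗ LinearMap.inl R _ _, ?_⟩,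
      ⟨(finAddLEquiv R A.n B.n).symm.toLinearMap ∘ₗ LinearMap.inr R _ _, ?_⟩, trivial⟩
    · ext v; simp
    · ext v; simp
  cocone_maps A B g₁ g₂ := by
    have h : B.f ∘ₗ (g₁.1 - g₂.1) = 0 := by
      refine LinearMap.ext fun v => ?_
      have h1 := DFunLike.congr_fun g₁.2 v
      have h2 := DFunLike.congr_fun g₂.2 v
      simp only [LinearMap.coe_comp, Function.comp_apply] at h1 h2
      simp [h1, h2]
    obtain ⟨k, a, y, hya, haf⟩ :=
      Module.Flat.exists_factorization_of_comp_eq_zero_of_free h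
    exact ⟨lazOfFactor M y, lazHomOfFactor M hya, Subtype.ext <| by
      refine LinearMap.ext fun v => ?_
      have := DFunLike.congr_fun haf v
      simp only [LinearMap.coe_comp, Function.comp_apply, LinearMap.sub_apply,
        LinearMap.zero_apply, map_sub, sub_eq_zero] at this
      show (finsuppLEquiv R (Fin k)) (a (g₁.1 v)) = (finsuppLEquiv R (Fin k)) (a (g₂.1 v))
      rw [this]⟩

end LazFiltered


section LazColimit

variable {R : Type u} [CommRing R] (M : ModuleCat.{u} R)

theorem lazard_flat [Module.Flat R M] :
    ∃ P : FilteredColimitPresentation R M,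
      ∀ j, Module.Finite R (P.F.obj j) ∧ Module.Free R (P.F.obj j) := by
  haveI : IsFiltered (LazObj M) := lazFiltered M
  have hbij : Function.Bijective (colimit.desc (lazF M) (lazCocone M)) := by
    constructor
    · rw [injective_iff_map_eq_zero]
      intro z hz
      obtain ⟨A, z₀, rfl⟩ := Concrete.colimit_exists_rep (lazF M) z
      have hz₀ : A.f z₀ = 0 := by
        have h := ConcreteCategory.congr_hom (colimit.ι_desc (lazCocone M) A) z₀
        exact h.symm.trans hz
      obtain ⟨k, a, y, hya, ha0⟩ :=
        Module.Flat.exists_factorization_of_apply_eq_zero_of_free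
          (N := Fin A.n → R) (x := A.f) (f := z₀) hz₀
      have w := ConcreteCategory.congr_hom (colimit.w (lazF M) (lazHomOfFactor M hya)) z₀
      have h0 : (lazF M).map (lazHomOfFactor M hya) z₀ = 0 := by
        show (finsuppLEquiv R (Fin k)) (a z₀) = 0
        rw [ha0, map_zero]
      calc colimit.ι (lazF M) A z₀
          = colimit.ι (lazF M) _ ((lazF M).map (lazHomOfFactor M hya) z₀) := w.symm
        _ = 0 := by rw [h0, map_zero]
    · intro x
      have h := ConcreteCategory.congr_hom
        (colimit.ι_desc (lazCocone M) ⟨1, (LinearMap.proj 0).smulRight x⟩) (fun _ => (1 : R))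
      exact ⟨colimit.ι (lazF M) ⟨1, (LinearMap.proj 0).smulRight x⟩ (fun _ => (1 : R)),
        h.trans (one_smul R x)⟩
  refine ⟨⟨LazObj M, lazFiltered M, lazF M,
    (LinearEquiv.ofBijective (colimit.desc (lazF M) (lazCocone M)).hom hbij).toModuleIso⟩,
    fun j => ⟨inferInstanceAs (Module.Finite R (Fin j.n → R)),
      inferInstanceAs (Module.Free R (Fin j.n → R))⟩⟩

end LazColimit

section FP

variable {R : Type u} [CommRing R] (M : ModuleCat.{u} R)

/-- An index object: a finitely presented module (presented as a quotient of a finite free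
module by a finitely generated submodule) with a map to `M`. -/
structure FPObj : Type u where
  n : ℕ
  K : Submodule R (Fin n → R)
  hK : K.FG
  f : ((Fin n → R) ⧸ K) →ₗ[R] M

/-- The underlying finitely presented module of an index object. -/
abbrev FPObj.Q (A : FPObj M) : Type u := (Fin A.n → R) ⧸ A.K

instance : SmallCategory (FPObj M) where
  Hom A B := {g : A.Q →ₗ[R] B.Q // B.f ∘ₗ g = A.f}
  id A := ⟨LinearMap.id, LinearMap.comp_id _⟩
  comp g h := ⟨h.1 ∘ₗ g.1, by rw [← LinearMap.comp_assoc, h.2, g.2]⟩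
  id_comp g := Subtype.ext (LinearMap.comp_id _)
  comp_id g := Subtype.ext (LinearMap.id_comp _)
  assoc f g h := Subtype.ext (LinearMap.comp_assoc _ _ _).symm

/-- The diagram of finitely presented modules over `M`. -/
noncomputable def fpF : FPObj M ⥤ ModuleCat.{u} R where
  obj A := ModuleCat.of R A.Q
  map g := ModuleCat.ofHom g.1
  map_id _ := rfl
  map_comp _ _ := rfl

/-- The cocone over `fpF` with point `M`. -/
noncomputable def fpCocone : Cocone (fpF M) where
  pt := M
  ι :=
    { app := fun A => ModuleCat.ofHom A.f
      naturality := fun A B g => by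
        simp only [Functor.const_obj_map, Category.comp_id]
        exact ModuleCat.hom_ext g.2 }

/-- Any finitely generated submodule of the kernel of `A.f` can be killed by a morphism
in the index category. -/
theorem fpKill (A : FPObj M) (S : Submodule R A.Q) (hS : S.FG)
    (hker : S ≤ LinearMap.ker A.f) :
    ∃ (B : FPObj M) (g : A ⟶ B), S ≤ LinearMap.ker g.1 := by
  obtain ⟨s, hs⟩ := hS
  choose w hw using fun x : s => A.K.mkQ_surjective (x : A.Q)
  set T : Submodule R (Fin A.n → R) := A.K ⊔ Submodule.span R (Set.range w) with hT
  have hTfg : T.FG := A.hK.sup (Submodule.fg_span (Set.finite_range w))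
  have hTker : T ≤ LinearMap.ker (A.f ∘ₗ A.K.mkQ) := by
    refine sup_le ?_ ?_
    · intro v hv
      simp only [LinearMap.mem_ker, LinearMap.coe_comp, Function.comp_apply]
      rw [show A.K.mkQ v = 0 from (Submodule.Quotient.mk_eq_zero A.K).mpr hv, map_zero]
    · rw [Submodule.span_le]
      rintro v ⟨x, rfl⟩
      simp only [SetLike.mem_coe, LinearMap.mem_ker, LinearMap.coe_comp, Function.comp_apply]
      rw [hw x]
      exact hker (hs ▸ Submodule.subset_span x.2)
  refine ⟨⟨A.n, T, hTfg, Submodule.liftQ T (A.f ∘ₗ A.K.mkQ) hTker⟩,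
    ⟨Submodule.mapQ A.K T LinearMap.id le_sup_left, ?_⟩, ?_⟩
  · refine Submodule.linearMap_qext _ (LinearMap.ext fun v => ?_)
    simp [Submodule.mapQ_apply, Submodule.liftQ_apply]
  · rw [← hs, Submodule.span_le]
    intro x hx
    have : (Submodule.mapQ A.K T LinearMap.id le_sup_left) (A.K.mkQ (w ⟨x, hx⟩)) = 0 := by
      rw [Submodule.mkQ_apply, Submodule.mapQ_apply, LinearMap.id_coe, id_eq]
      exact (Submodule.Quotient.mk_eq_zero T).mpr
        (Submodule.mem_sup_right (Submodule.subset_span (Set.mem_range_self _)))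
    simpa [hw] using this

theorem fpFiltered : IsFiltered (FPObj M) where
  nonempty := ⟨⟨0, ⊥, Submodule.fg_bot, 0⟩⟩
  cocone_objs A B := by
    set e := finAddLEquiv R A.n B.n with he
    set ψ : (Fin (A.n + B.n) → R) →ₗ[R] A.Q × B.Q :=
      (A.K.mkQ.prodMap B.K.mkQ) ∘ₗ e.toLinearMap with hψ
    have hsurj : Function.Surjective ψ := by
      intro p
      obtain ⟨a, ha⟩ := A.K.mkQ_surjective p.1
      obtain ⟨b, hb⟩ := B.K.mkQ_surjective p.2
      refine ⟨e.symm (a, b), ?_⟩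
      simp only [hψ, LinearMap.coe_comp, LinearEquiv.coe_coe, Function.comp_apply,
        LinearEquiv.apply_symm_apply, LinearMap.prodMap_apply, ha, hb]
    have hkerfg : (LinearMap.ker ψ).FG := by
      have : LinearMap.ker ψ = Submodule.map e.symm.toLinearMap (A.K.prod B.K) := by
        rw [hψ, LinearMap.ker_comp, LinearMap.ker_prodMap, Submodule.ker_mkQ, Submodule.ker_mkQ,
          ← Submodule.comap_equiv_eq_map_symm]
      rw [this]
      exact (A.hK.prod B.hK).map _
    set E : (((Fin (A.n + B.n) → R)) ⧸ LinearMap.ker ψ) ≃ₗ[R] A.Q × B.Q :=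
      LinearEquiv.ofBijective ((LinearMap.ker ψ).liftQ ψ le_rfl)
        ⟨LinearMap.ker_eq_bot.mp (Submodule.ker_liftQ_eq_bot _ _ _ le_rfl), by
          intro p
          obtain ⟨v, hv⟩ := hsurj p
          exact ⟨Submodule.Quotient.mk v, by rwa [Submodule.liftQ_apply]⟩⟩ with hE
    refine ⟨⟨A.n + B.n, LinearMap.ker ψ, hkerfg, (A.f.coprod B.f) ∘ₗ E.toLinearMap⟩,
      ⟨E.symm.toLinearMap ∘ₗ LinearMap.inl R A.Q B.Q, ?_⟩,
      ⟨E.symm.toLinearMap ∘ₗ LinearMap.inr R A.Q B.Q, ?_⟩, trivial⟩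
    · refine LinearMap.ext fun q => ?_
      simp
    · refine LinearMap.ext fun q => ?_
      simp
  cocone_maps A B g₁ g₂ := by
    have hSfg : (LinearMap.range (g₁.1 - g₂.1)).FG := by
      rw [LinearMap.range_eq_map]
      exact (Module.finite_def.mp inferInstance).map _
    have hSker : LinearMap.range (g₁.1 - g₂.1) ≤ LinearMap.ker B.f := by
      rintro x ⟨v, rfl⟩
      have h1 := DFunLike.congr_fun g₁.2 v
      have h2 := DFunLike.congr_fun g₂.2 v
      simp only [LinearMap.coe_comp, Function.comp_apply] at h1 h2
      simp [map_sub, h1, h2]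
    obtain ⟨C, h, hk⟩ := fpKill M B _ hSfg hSker
    refine ⟨C, h, Subtype.ext (LinearMap.ext fun v => ?_)⟩
    have := hk (LinearMap.mem_range_self (g₁.1 - g₂.1) v)
    simp only [LinearMap.mem_ker, LinearMap.sub_apply, map_sub, sub_eq_zero] at this
    exact this

end FP

section FPColimit

variable {R : Type u} [CommRing R] (M : ModuleCat.{u} R)

theorem fp_presentation :
    ∃ P : FilteredColimitPresentation R M, ∀ j, Module.FinitePresentation R (P.F.obj j) := by
  haveI : IsFiltered (FPObj M) := fpFiltered M
  have hbij : Function.Bijective (colimit.desc (fpF M) (fpCocone M)) := by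
    constructor
    · rw [injective_iff_map_eq_zero]
      intro z hz
      obtain ⟨A, z₀, rfl⟩ := Concrete.colimit_exists_rep (fpF M) z
      have hz₀ : A.f z₀ = 0 :=
        (ConcreteCategory.congr_hom (colimit.ι_desc (fpCocone M) A) z₀).symm.trans hz
      have hS : Submodule.span R {(@id A.Q z₀)} ≤ LinearMap.ker A.f := by
        rw [Submodule.span_singleton_le_iff_mem]
        exact hz₀
      obtain ⟨B, g, hk⟩ := fpKill M A _ (Submodule.fg_span_singleton _) hS
      have h0 : g.1 z₀ = 0 := hk (Submodule.mem_span_singleton_self _)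
      have w := ConcreteCategory.congr_hom (colimit.w (fpF M) g) z₀
      calc colimit.ι (fpF M) A z₀
          = colimit.ι (fpF M) B ((fpF M).map g z₀) := w.symm
        _ = 0 := by
            rw [show (fpF M).map g z₀ = 0 from h0, map_zero]
    · intro x
      have h := ConcreteCategory.congr_hom
        (colimit.ι_desc (fpCocone M)
          ⟨1, ⊥, Submodule.fg_bot, Submodule.liftQ ⊥ ((LinearMap.proj 0).smulRight x) bot_le⟩)
        (Submodule.Quotient.mk (fun _ => (1 : R)))
      refine ⟨_, h.trans ?_⟩
      exact one_smul R x
  refine ⟨⟨FPObj M, fpFiltered M, fpF M,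
    (LinearEquiv.ofBijective (colimit.desc (fpF M) (fpCocone M)).hom hbij).toModuleIso⟩,
    fun j => ?_⟩
  exact Module.finitePresentation_of_surjective j.K.mkQ (Submodule.mkQ_surjective _)
    (by erw [Submodule.ker_mkQ]; exact j.hK)

end FPColimit

/-- Every module is a filtered colimit of finitely presented modules; and every flat
module is a filtered colimit of finitely generated free modules (Lazard). -/
theorem lazard (R : Type u) [CommRing R] (M : ModuleCat.{u} R) :
    (∃ P : FilteredColimitPresentation R M,
        ∀ j, Module.FinitePresentation R (P.F.obj j)) ∧
      (Module.Flat R M →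
        ∃ P : FilteredColimitPresentation R M,
          ∀ j, Module.Finite R (P.F.obj j) ∧ Module.Free R (P.F.obj j)) := by
  refine ⟨fp_presentation M, fun h => ?_⟩
  haveI := h
  exact lazard_flat M
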